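/- Let f and g be analytic at λ₀ with f(λ₀) ≠ 0 and g having a zero of order 2 at λ₀. Then the regularized limit of f/g at λ₀ equals f''(λ₀)/g''(λ₀) − (2/3) f'(λ₀)g'''(λ₀)/(g''(λ₀))² + f(λ₀)(4(g'''(λ₀))² − 3g''(λ₀)g''''(λ₀))/(18(g''(λ₀))³). -/

import Mathlib

open Filter Topology

section Auxiliary

open Metric Complex intervalIntegral

private lemma analyticAt_deriv_aux {h : ℂ → ℂ} {z : ℂ} (hz : AnalyticAt ℂ h z) :
    AnalyticAt ℂ (deriv h) z :=
  (AnalyticOnNhd.deriv (fun _ hw => hw : AnalyticOnNhd ℂ h {w | AnalyticAt ℂ h w})) z hz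

private lemma laurent_coeff_zero_aux (F : ℂ → ℂ) (z₀ : ℂ) (ρ : ℝ) (hρ : 0 < ρ) (c : ℤ → ℂ)
    (hc : ∀ lam : ℂ, lam ≠ z₀ → ‖lam - z₀‖ ≤ ρ →
      HasSum (fun k : ℤ => c k * (lam - z₀) ^ k) (F lam)) :
    (∮ z in C(z₀, ρ), (z - z₀)⁻¹ * F z) = 2 * Real.pi * Complex.I * c 0 := by
  have hρ' : ρ ≠ 0 := hρ.ne'
  set x₀ : ℂ := z₀ + ρ with hx₀def
  have hx₀ : x₀ ≠ z₀ := by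
    simp only [hx₀def, ne_eq, add_eq_left]
    exact_mod_cast hρ'
  have hx₀n : ‖x₀ - z₀‖ = ρ := by
    simp [hx₀def, abs_of_pos hρ]
  have hsum : Summable fun k : ℤ => ‖c k‖ * ρ ^ k := by
    have := ((hc x₀ hx₀ (le_of_eq hx₀n)).summable).norm
    convert this using 2 with k
    rw [norm_mul, norm_zpow, hx₀n]
  have key : HasSum
      (fun k : ℤ => ∫ θ in (0:ℝ)..2*Real.pi,
        deriv (circleMap z₀ ρ) θ • (c k * (circleMap z₀ ρ θ - z₀) ^ (k - 1)))
      (∫ θ in (0:ℝ)..2*Real.pi,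
        deriv (circleMap z₀ ρ) θ • ((circleMap z₀ ρ θ - z₀)⁻¹ * F (circleMap z₀ ρ θ))) := by
    apply intervalIntegral.hasSum_integral_of_dominated_convergence
      (bound := fun k _ => ‖c k‖ * ρ ^ k)
    · intro k
      apply Continuous.aestronglyMeasurable
      have h1 : Continuous fun θ => circleMap z₀ ρ θ - z₀ := by
        simpa [circleMap_sub_center] using (continuous_circleMap 0 ρ)
      have h2 : Continuous fun θ => (circleMap z₀ ρ θ - z₀) ^ (k - 1) := by
        apply h1.zpow₀
        intro θ
        left
        rw [circleMap_sub_center]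
        exact circleMap_ne_center hρ'
      have h3 : Continuous fun θ => deriv (circleMap z₀ ρ) θ := by
        simp only [deriv_circleMap]
        exact (continuous_circleMap 0 ρ).mul continuous_const
      exact h3.smul (continuous_const.mul h2)
    · intro k
      filter_upwards with θ _
      have hne : circleMap z₀ ρ θ - z₀ ≠ 0 := by
        rw [circleMap_sub_center]; exact circleMap_ne_center hρ'
      have hnorm : ‖circleMap z₀ ρ θ - z₀‖ = ρ := by
        rw [circleMap_sub_center]
        simpa [abs_of_pos hρ] using abs_circleMap_zero ρ θ
      rw [norm_smul, norm_mul, norm_zpow, hnorm]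
      have hd : ‖deriv (circleMap z₀ ρ) θ‖ = ρ := by
        simp [deriv_circleMap, abs_of_pos hρ, norm_mul]
      rw [hd, zpow_sub₀ (ne_of_gt hρ), zpow_one]
      rw [mul_comm ρ _, mul_assoc, div_mul_cancel₀]
      exact hρ'
    · filter_upwards with θ _
      exact hsum
    · apply _root_.intervalIntegrable_const
    · filter_upwards with θ _
      have hne : circleMap z₀ ρ θ ≠ z₀ := circleMap_ne_center hρ'
      have hnorm : ‖circleMap z₀ ρ θ - z₀‖ ≤ ρ := by
        rw [circleMap_sub_center]
        simp [abs_of_pos hρ]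
      have := (hc _ hne hnorm).mul_left (circleMap z₀ ρ θ - z₀)⁻¹
      have := this.const_smul (deriv (circleMap z₀ ρ) θ)
      convert this using 2 with k
      · rfl
      have hne' : circleMap z₀ ρ θ - z₀ ≠ 0 := sub_ne_zero.mpr hne
      rw [smul_eq_mul, smul_eq_mul]
      rw [zpow_sub₀ hne', zpow_one]
      field_simp
  have hterm : ∀ k : ℤ, (∫ θ in (0:ℝ)..2*Real.pi,
      deriv (circleMap z₀ ρ) θ • (c k * (circleMap z₀ ρ θ - z₀) ^ (k - 1)))
      = if k = 0 then 2 * Real.pi * Complex.I * c 0 else 0 := by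
    intro k
    have : (∫ θ in (0:ℝ)..2*Real.pi,
        deriv (circleMap z₀ ρ) θ • (c k * (circleMap z₀ ρ θ - z₀) ^ (k - 1)))
        = ∮ z in C(z₀, ρ), c k * (z - z₀) ^ (k - 1) := rfl
    rw [this]
    by_cases hk : k = 0
    · subst hk
      simp only [if_pos]
      have : (∮ z in C(z₀, ρ), c 0 * (z - z₀) ^ ((0:ℤ) - 1))
          = c 0 • ∮ z in C(z₀, ρ), (z - z₀) ^ ((0:ℤ) - 1) := by
        simpa [smul_eq_mul] using circleIntegral.integral_smul (c 0)
          (fun z => (z - z₀) ^ ((0:ℤ) - 1)) z₀ ρ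
      rw [this]
      have h0 : ∀ z : ℂ, (z - z₀) ^ ((0:ℤ) - 1) = (z - z₀)⁻¹ := by
        intro z; norm_num
      simp_rw [h0]
      rw [circleIntegral.integral_sub_inv_of_mem_ball (mem_ball_self hρ)]
      rw [smul_eq_mul]; ring
    · rw [if_neg hk]
      have : (∮ z in C(z₀, ρ), c k * (z - z₀) ^ (k - 1))
          = c k • ∮ z in C(z₀, ρ), (z - z₀) ^ (k - 1) := by
        simpa [smul_eq_mul] using circleIntegral.integral_smul (c k)
          (fun z => (z - z₀) ^ (k - 1)) z₀ ρ
      rw [this, circleIntegral.integral_sub_zpow_of_ne (by omega) z₀ z₀ ρ, smul_zero]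
  rw [show (∮ z in C(z₀, ρ), (z - z₀)⁻¹ * F z) = (∫ θ in (0:ℝ)..2*Real.pi,
        deriv (circleMap z₀ ρ) θ • ((circleMap z₀ ρ θ - z₀)⁻¹ * F (circleMap z₀ ρ θ))) from rfl]
  have key2 : HasSum (fun k : ℤ => if k = 0 then 2 * Real.pi * Complex.I * c 0 else 0)
      (∫ θ in (0:ℝ)..2*Real.pi,
        deriv (circleMap z₀ ρ) θ • ((circleMap z₀ ρ θ - z₀)⁻¹ * F (circleMap z₀ ρ θ))) := by
    convert key using 2 with k
    rw [hterm]
  have key3 : HasSum (fun k : ℤ => if k = 0 then 2 * Real.pi * Complex.I * c 0 else 0)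
      (2 * Real.pi * Complex.I * c 0) := hasSum_ite_eq 0 _
  exact (key3.unique key2).symm

end Auxiliary

/-- Let `f` and `g` be analytic at `z₀` with `f z₀ ≠ 0` and `g` having a
zero of order 2 at `z₀`. Then the regularized limit of `f/g` at `z₀` (the constant
Laurent coefficient `c 0` of `f/g` there) equals
`f''/g'' − (2/3) f' g'''/(g'')² + f (4(g''')² − 3 g'' g'''')/(18 (g'')³)`,
all derivatives evaluated at `z₀`. -/
theorem regularized_limit_double_pole (f g : ℂ → ℂ) (z₀ : ℂ)
    (hf : AnalyticAt ℂ f z₀) (hg : AnalyticAt ℂ g z₀)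
    (hf0 : f z₀ ≠ 0) (hg0 : g z₀ = 0) (hg1 : deriv g z₀ = 0)
    (hg2 : iteratedDeriv 2 g z₀ ≠ 0)
    (r : ℝ) (hr : 0 < r) (c : ℤ → ℂ)
    (hc : ∀ lam : ℂ, lam ≠ z₀ → ‖lam - z₀‖ < r →
      HasSum (fun k : ℤ => c k * (lam - z₀) ^ k) (f lam / g lam)) :
    c 0 = iteratedDeriv 2 f z₀ / iteratedDeriv 2 g z₀ -
      (2 / 3) * (deriv f z₀ * iteratedDeriv 3 g z₀) / (iteratedDeriv 2 g z₀) ^ 2 +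
      f z₀ * (4 * (iteratedDeriv 3 g z₀) ^ 2 -
          3 * iteratedDeriv 2 g z₀ * iteratedDeriv 4 g z₀) /
        (18 * (iteratedDeriv 2 g z₀) ^ 3) := by
  classical
  open Metric Complex in
  -- the analytic factor `h` with `g = (z - z₀)² h`
  set h : ℂ → ℂ := dslope (dslope g z₀) z₀ with hh_def
  have hh : AnalyticAt ℂ h z₀ := by
    obtain ⟨p, hp⟩ := hg
    exact ⟨_, hp.has_fpower_series_dslope_fslope.has_fpower_series_dslope_fslope⟩
  have hfact : ∀ z : ℂ, g z = (z - z₀) ^ 2 * h z := by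
    intro z
    have e1 : (z - z₀) • dslope g z₀ z = g z - g z₀ := sub_smul_dslope g z₀ z
    have e2 : (z - z₀) • h z = dslope g z₀ z - dslope g z₀ z₀ :=
      sub_smul_dslope (dslope g z₀) z₀ z
    have e3 : dslope g z₀ z₀ = deriv g z₀ := dslope_same _ _
    rw [smul_eq_mul] at e1 e2
    rw [e3, hg1, sub_zero] at e2
    rw [hg0, sub_zero] at e1
    rw [← e1, ← e2]; ring
  -- derivatives of g at z₀ in terms of h
  have hh_ev : ∀ᶠ z in 𝓝 z₀, AnalyticAt ℂ h z := hh.eventually_analyticAt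
  have hgeq : g = fun z => (z - z₀) ^ 2 * h z := funext hfact
  have hid : ∀ z : ℂ, HasDerivAt (fun w : ℂ => w - z₀) 1 z := fun z => by
    simpa using (hasDerivAt_id z).sub_const z₀
  have hsq : ∀ z : ℂ, HasDerivAt (fun w : ℂ => (w - z₀) ^ 2) (2 * (z - z₀)) z := fun z => by
    simpa using (hid z).fun_pow 2
  have hd1 : deriv g =ᶠ[𝓝 z₀]
      fun z => 2 * (z - z₀) * h z + (z - z₀) ^ 2 * deriv h z := by
    filter_upwards [hh_ev] with z hz
    rw [hgeq]
    have H : HasDerivAt (fun w => (w - z₀) ^ 2 * h w)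
        (2 * (z - z₀) * h z + (z - z₀) ^ 2 * deriv h z) z :=
      (hsq z).mul hz.differentiableAt.hasDerivAt
    exact H.deriv
  have hd2 : deriv (deriv g) =ᶠ[𝓝 z₀]
      fun z => 2 * h z + 4 * (z - z₀) * deriv h z + (z - z₀) ^ 2 * deriv (deriv h) z := by
    refine hd1.deriv.trans ?_
    filter_upwards [hh_ev] with z hz
    have H : HasDerivAt (fun w => 2 * (w - z₀) * h w + (w - z₀) ^ 2 * deriv h w)
        (2 * h z + 4 * (z - z₀) * deriv h z + (z - z₀) ^ 2 * deriv (deriv h) z) z := by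
      have h1 : HasDerivAt (fun w : ℂ => 2 * (w - z₀)) 2 z := by
        simpa using (hid z).const_mul 2
      have := (h1.fun_mul hz.differentiableAt.hasDerivAt).fun_add
        ((hsq z).fun_mul (analyticAt_deriv_aux hz).differentiableAt.hasDerivAt)
      convert this using 1
      · rfl
      · rfl
      ring
    exact H.deriv
  have hd3 : deriv (deriv (deriv g)) =ᶠ[𝓝 z₀]
      fun z => 6 * deriv h z + 6 * (z - z₀) * deriv (deriv h) z
        + (z - z₀) ^ 2 * deriv (deriv (deriv h)) z := by
    refine hd2.deriv.trans ?_
    filter_upwards [hh_ev] with z hz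
    have H : HasDerivAt (fun w => 2 * h w + 4 * (w - z₀) * deriv h w
          + (w - z₀) ^ 2 * deriv (deriv h) w)
        (6 * deriv h z + 6 * (z - z₀) * deriv (deriv h) z
          + (z - z₀) ^ 2 * deriv (deriv (deriv h)) z) z := by
      have h1 : HasDerivAt (fun w : ℂ => 4 * (w - z₀)) 4 z := by
        simpa using (hid z).const_mul 4
      have := ((hz.differentiableAt.hasDerivAt.const_mul 2).fun_add
        (h1.fun_mul (analyticAt_deriv_aux hz).differentiableAt.hasDerivAt)).fun_add
        ((hsq z).fun_mul (analyticAt_deriv_aux (analyticAt_deriv_aux hz)).differentiableAt.hasDerivAt)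
      convert this using 1
      · rfl
      · rfl
      ring
    exact H.deriv
  have hd4 : deriv (deriv (deriv (deriv g))) z₀ = 12 * deriv (deriv h) z₀ := by
    rw [hd3.deriv.self_of_nhds]
    have H : HasDerivAt (fun w => 6 * deriv h w + 6 * (w - z₀) * deriv (deriv h) w
          + (w - z₀) ^ 2 * deriv (deriv (deriv h)) w)
        (12 * deriv (deriv h) z₀) z₀ := by
      have h1 : HasDerivAt (fun w : ℂ => 6 * (w - z₀)) 6 z₀ := by
        simpa using (hid z₀).const_mul 6
      have := (((analyticAt_deriv_aux hh).differentiableAt.hasDerivAt.const_mul 6).fun_add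
        (h1.fun_mul (analyticAt_deriv_aux (analyticAt_deriv_aux hh)).differentiableAt.hasDerivAt)).fun_add
        ((hsq z₀).fun_mul (analyticAt_deriv_aux (analyticAt_deriv_aux
          (analyticAt_deriv_aux hh))).differentiableAt.hasDerivAt)
      convert this using 1
      · rfl
      · rfl
      simp
      ring
    exact H.deriv
  have hg2' : iteratedDeriv 2 g z₀ = 2 * h z₀ := by
    have := hd2.self_of_nhds
    simp only [sub_self] at this
    rw [show iteratedDeriv 2 g = deriv (deriv g) by
      rw [iteratedDeriv_succ, iteratedDeriv_one], this]
    ring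
  have hg3' : iteratedDeriv 3 g z₀ = 6 * deriv h z₀ := by
    have := hd3.self_of_nhds
    simp only [sub_self] at this
    rw [show iteratedDeriv 3 g = deriv (deriv (deriv g)) by
      rw [iteratedDeriv_succ, iteratedDeriv_succ, iteratedDeriv_one], this]
    ring
  have hg4' : iteratedDeriv 4 g z₀ = 12 * deriv (deriv h) z₀ := by
    rw [show iteratedDeriv 4 g = deriv (deriv (deriv (deriv g))) by
      rw [iteratedDeriv_succ, iteratedDeriv_succ, iteratedDeriv_succ, iteratedDeriv_one], hd4]
  have ha : h z₀ ≠ 0 := by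
    intro h0
    apply hg2
    rw [hg2', h0, mul_zero]
  -- the quotient φ = f / h and its second derivative at z₀
  set φ : ℂ → ℂ := fun w => f w / h w with hφdef
  have hφ : AnalyticAt ℂ φ z₀ := hf.div hh ha
  have hne_ev : ∀ᶠ z in 𝓝 z₀, h z ≠ 0 := hh.continuousAt.eventually_ne ha
  have hφ2 : iteratedDeriv 2 φ z₀ =
      ((deriv (deriv f) z₀ * h z₀ - f z₀ * deriv (deriv h) z₀) * h z₀ ^ 2
        - (deriv f z₀ * h z₀ - f z₀ * deriv h z₀) * (2 * h z₀ * deriv h z₀)) / (h z₀ ^ 2) ^ 2 := by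
    have hp1 : deriv φ =ᶠ[𝓝 z₀]
        fun z => (deriv f z * h z - f z * deriv h z) / h z ^ 2 := by
      filter_upwards [hf.eventually_analyticAt, hh_ev, hne_ev] with z hfz hhz hz0
      exact deriv_div hfz.differentiableAt hhz.differentiableAt hz0
    rw [show iteratedDeriv 2 φ = deriv (deriv φ) by
      rw [iteratedDeriv_succ, iteratedDeriv_one]]
    rw [hp1.deriv.self_of_nhds]
    have hN : HasDerivAt (fun z => deriv f z * h z - f z * deriv h z)
        (deriv (deriv f) z₀ * h z₀ - f z₀ * deriv (deriv h) z₀) z₀ := by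
      have := ((analyticAt_deriv_aux hf).differentiableAt.hasDerivAt.fun_mul
          hh.differentiableAt.hasDerivAt).fun_sub
        (hf.differentiableAt.hasDerivAt.fun_mul (analyticAt_deriv_aux hh).differentiableAt.hasDerivAt)
      convert this using 1
      · rfl
      · rfl
      ring
    have hD : HasDerivAt (fun z => h z ^ 2) (2 * h z₀ * deriv h z₀) z₀ := by
      have := hh.differentiableAt.hasDerivAt.fun_pow 2
      convert this using 1
      · rfl
      · rfl
      ring
    exact (hN.div hD (pow_ne_zero 2 ha)).deriv
  -- a ball on which φ is analytic and h is nonvanishing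
  obtain ⟨ε, hε, hball⟩ : ∃ ε > 0, ∀ z ∈ ball z₀ ε, AnalyticAt ℂ φ z ∧ h z ≠ 0 := by
    have := hφ.eventually_analyticAt.and hne_ev
    rwa [Metric.eventually_nhds_iff_ball] at this
  -- the explicit Laurent coefficients
  set d : ℤ → ℂ := fun k =>
    if 0 ≤ k + 2 then ((Nat.factorial (k + 2).toNat : ℕ) : ℂ)⁻¹ *
      iteratedDeriv (k + 2).toNat φ z₀ else 0 with hd_def
  set ρ : ℝ := min (ε / 2) (r / 2) with hρdef
  have hρ : 0 < ρ := lt_min (by linarith) (by linarith)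
  have hρε : ρ < ε := lt_of_le_of_lt (min_le_left _ _) (by linarith)
  have hρr : ρ < r := lt_of_le_of_lt (min_le_right _ _) (by linarith)
  have hd : ∀ lam : ℂ, lam ≠ z₀ → ‖lam - z₀‖ ≤ ρ →
      HasSum (fun k : ℤ => d k * (lam - z₀) ^ k) (f lam / g lam) := by
    intro lam hlam hnorm
    have hmem : lam ∈ ball z₀ ε := by
      rw [mem_ball, dist_eq_norm]; exact lt_of_le_of_lt hnorm hρε
    have hdiff : DifferentiableOn ℂ φ (ball z₀ ε) := fun z hz =>
      ((hball z hz).1).differentiableAt.differentiableWithinAt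
    have HS := Complex.hasSum_taylorSeries_on_ball hdiff hmem
    have hx : lam - z₀ ≠ 0 := sub_ne_zero.mpr hlam
    have HS2 := HS.mul_right ((lam - z₀) ^ (-2 : ℤ))
    have hval : φ lam * (lam - z₀) ^ (-2 : ℤ) = f lam / g lam := by
      rw [hfact lam, hφdef]
      have hhl : h lam ≠ 0 := (hball lam hmem).2
      rw [zpow_neg, show ((2:ℤ) = (2:ℕ)) from rfl, zpow_natCast]
      rw [← div_eq_mul_inv, div_div, mul_comm (h lam)]
    rw [hval] at HS2
    have hinj : Function.Injective (fun n : ℕ => (n : ℤ) - 2) := by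
      intro a b hab; simpa using hab
    refine (Function.Injective.hasSum_iff hinj ?_).mp ?_
    · intro k hk
      have hk2 : ¬ (0 ≤ k + 2) := by
        intro hge
        exact hk ⟨(k + 2).toNat, by simp; omega⟩
      rw [hd_def]
      simp only [if_neg hk2, zero_mul]
    · convert HS2 using 1
      · rfl
      funext n
      simp only [Function.comp_apply, hd_def]
      rw [if_pos (by omega : (0:ℤ) ≤ (n : ℤ) - 2 + 2)]
      have h1 : ((n : ℤ) - 2 + 2).toNat = n := by omega
      rw [h1]
      rw [show ((n:ℤ) - 2) = (n : ℤ) + (-2) by ring, zpow_add₀ hx, zpow_natCast]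
      rw [smul_eq_mul, smul_eq_mul]
      ring
  -- uniqueness of the constant Laurent coefficient
  have h1 := laurent_coeff_zero_aux (fun z => f z / g z) z₀ ρ hρ c
    (fun lam hlam hnorm => hc lam hlam (lt_of_le_of_lt hnorm hρr))
  have h2 := laurent_coeff_zero_aux (fun z => f z / g z) z₀ ρ hρ d hd
  have hpiI : (2 * (Real.pi : ℂ) * Complex.I) ≠ 0 := by
    simp [Real.pi_ne_zero, Complex.I_ne_zero]
  have hc0 : c 0 = d 0 := mul_left_cancel₀ hpiI (h1.symm.trans h2)
  have hd0 : d 0 = (2 : ℂ)⁻¹ * iteratedDeriv 2 φ z₀ := by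
    rw [hd_def]
    norm_num [Nat.factorial]
    change ((Nat.factorial 2 : ℕ) : ℂ)⁻¹ * iteratedDeriv 2 φ z₀ = _
    norm_num [Nat.factorial]
  rw [hc0, hd0, hφ2, hg2', hg3', hg4',
    show iteratedDeriv 2 f = deriv (deriv f) by rw [iteratedDeriv_succ, iteratedDeriv_one]]
  field_simp
  ring
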